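/- Let p, q ≥ 2 be coprime integers, let k, l be integers with 1 ≤ k ≤ q−1, 1 ≤ l ≤ p−1 and k ≡ l (mod 2), and let z ∈ ℂ. Then there exist A, B ∈ SL(2,ℂ) with A^q = B^p, tr A = 2cos(kπ/q), tr B = 2cos(lπ/p), and tr(AB) = z. -/

import Mathlib

open Complex Matrix

private lemma diag_pow (x y : ℂ) (n : ℕ) :
    (!![x,0;0,y]) ^ n = !![x^n,0;0,y^n] := by
  induction n with
  | zero => simp [Matrix.one_fin_two]
  | succ n ih =>
      rw [pow_succ, ih, Matrix.mul_fin_two]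
      congr 1 <;> ring

private lemma conj_pow' (C D : Matrix (Fin 2) (Fin 2) ℂ) (h : IsUnit C.det) (n : ℕ) :
    (C * D * C⁻¹) ^ n = C * D ^ n * C⁻¹ := by
  induction n with
  | zero => simpa using (Matrix.mul_nonsing_inv C h).symm
  | succ n ih =>
      rw [pow_succ, ih, pow_succ]
      calc C * D ^ n * C⁻¹ * (C * D * C⁻¹)
          = C * D ^ n * (C⁻¹ * C) * D * C⁻¹ := by noncomm_ring
        _ = C * (D ^ n * D) * C⁻¹ := by rw [Matrix.nonsing_inv_mul C h]; noncomm_ring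

theorem stmt_5 (p q : ℕ) (hp : 2 ≤ p) (hq : 2 ≤ q) (hpq : Nat.Coprime p q)
    (k l : ℕ) (hk1 : 1 ≤ k) (hk2 : k ≤ q - 1) (hl1 : 1 ≤ l) (hl2 : l ≤ p - 1)
    (hkl : k % 2 = l % 2) (z : ℂ) :
    ∃ A B : Matrix.SpecialLinearGroup (Fin 2) ℂ,
      A ^ q = B ^ p ∧
      Matrix.trace A.1 = ((2 * Real.cos (k * Real.pi / q) : ℝ) : ℂ) ∧
      Matrix.trace B.1 = ((2 * Real.cos (l * Real.pi / p) : ℝ) : ℂ) ∧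
      Matrix.trace ((A * B : Matrix.SpecialLinearGroup (Fin 2) ℂ) : Matrix (Fin 2) (Fin 2) ℂ) = z := by
  have hq0 : (0:ℝ) < q := by positivity
  have hp0 : (0:ℝ) < p := by positivity
  set θa : ℝ := k * Real.pi / q with hθa
  set θb : ℝ := l * Real.pi / p with hθb
  have hπ := Real.pi_pos
  have hθa_pos : 0 < θa := by
    have : (0:ℝ) < k := by exact_mod_cast hk1
    positivity
  have hθa_lt : θa < Real.pi := by
    rw [hθa, div_lt_iff₀ hq0]
    have hkq : (k:ℝ) < q := by
      have : k < q := lt_of_le_of_lt hk2 (by omega)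
      exact_mod_cast this
    nlinarith
  have hθb_pos : 0 < θb := by
    have : (0:ℝ) < l := by exact_mod_cast hl1
    positivity
  have hθb_lt : θb < Real.pi := by
    rw [hθb, div_lt_iff₀ hp0]
    have hlp : (l:ℝ) < p := by
      have : l < p := lt_of_le_of_lt hl2 (by omega)
      exact_mod_cast this
    nlinarith
  set α : ℂ := Complex.exp (θa * I) with hα
  set β : ℂ := Complex.exp (θb * I) with hβ
  have hα0 : α ≠ 0 := Complex.exp_ne_zero _
  have hβ0 : β ≠ 0 := Complex.exp_ne_zero _
  have hexpI : ∀ θ : ℝ, Complex.exp ((θ:ℂ) * I) = Complex.cos θ + Complex.sin θ * I :=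
    fun θ => Complex.exp_mul_I _
  have hexpnegI : ∀ θ : ℝ, Complex.exp (-((θ:ℂ) * I)) = Complex.cos θ - Complex.sin θ * I := by
    intro θ
    rw [show -((θ:ℂ) * I) = ((-θ : ℂ)) * I by ring, Complex.exp_mul_I]
    simp
    ring
  have hαinv : α⁻¹ = Complex.exp (-(θa * I)) := by rw [hα, ← Complex.exp_neg]
  have hβinv : β⁻¹ = Complex.exp (-(θb * I)) := by rw [hβ, ← Complex.exp_neg]
  -- traces
  have htrα : α + α⁻¹ = ((2 * Real.cos θa : ℝ) : ℂ) := by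
    rw [hα, hαinv, hexpI, hexpnegI]
    push_cast
    ring
  have htrβ : β + β⁻¹ = ((2 * Real.cos θb : ℝ) : ℂ) := by
    rw [hβ, hβinv, hexpI, hexpnegI]
    push_cast
    ring
  -- α - α⁻¹ ≠ 0, β - β⁻¹ ≠ 0
  have hsin : ∀ θ : ℝ, 0 < θ → θ < Real.pi →
      Complex.exp (θ * I) - (Complex.exp (θ * I))⁻¹ ≠ 0 := by
    intro θ h1 h2
    rw [← Complex.exp_neg, hexpI, hexpnegI]
    have : Complex.cos θ + Complex.sin θ * I - (Complex.cos θ - Complex.sin θ * I)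
        = 2 * Complex.sin θ * I := by ring
    rw [this]
    have hs : Real.sin θ ≠ 0 := ne_of_gt (Real.sin_pos_of_pos_of_lt_pi h1 h2)
    have hs' : Complex.sin θ ≠ 0 := by
      rw [← Complex.ofReal_sin]
      exact_mod_cast hs
    exact mul_ne_zero (mul_ne_zero two_ne_zero hs') Complex.I_ne_zero
  have hαd : α - α⁻¹ ≠ 0 := hsin θa hθa_pos hθa_lt
  have hβd : β - β⁻¹ ≠ 0 := hsin θb hθb_pos hθb_lt
  -- powers
  have hqθ : (q:ℝ) * θa = k * Real.pi := by rw [hθa]; field_simp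
  have hpθ : (p:ℝ) * θb = l * Real.pi := by rw [hθb]; field_simp
  have hαq : α ^ q = (-1 : ℂ) ^ k := by
    rw [hα, ← Complex.exp_nat_mul]
    have : (q : ℂ) * ((θa:ℂ) * I) = (k : ℂ) * ((Real.pi : ℂ) * I) := by
      have : ((q:ℝ) * θa : ℝ) = ((k * Real.pi : ℝ)) := hqθ
      calc (q : ℂ) * ((θa:ℂ) * I) = (((q:ℝ) * θa : ℝ) : ℂ) * I := by push_cast; ring
        _ = (k : ℂ) * ((Real.pi : ℂ) * I) := by rw [this]; push_cast; ring
    rw [this, Complex.exp_nat_mul, Complex.exp_pi_mul_I]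
  have hβp : β ^ p = (-1 : ℂ) ^ l := by
    rw [hβ, ← Complex.exp_nat_mul]
    have : (p : ℂ) * ((θb:ℂ) * I) = (l : ℂ) * ((Real.pi : ℂ) * I) := by
      have : ((p:ℝ) * θb : ℝ) = ((l * Real.pi : ℝ)) := hpθ
      calc (p : ℂ) * ((θb:ℂ) * I) = (((p:ℝ) * θb : ℝ) : ℂ) * I := by push_cast; ring
        _ = (l : ℂ) * ((Real.pi : ℂ) * I) := by rw [this]; push_cast; ring
    rw [this, Complex.exp_nat_mul, Complex.exp_pi_mul_I]
  have hneg : ((-1 : ℂ)) ^ k = (-1 : ℂ) ^ l := by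
    rcases Nat.even_or_odd k with he | ho
    · have : Even l := by rw [Nat.even_iff] at he ⊢; omega
      rw [he.neg_one_pow, this.neg_one_pow]
    · have : Odd l := by rw [Nat.odd_iff] at ho ⊢; omega
      rw [ho.neg_one_pow, this.neg_one_pow]
  set w : ℂ := (-1 : ℂ) ^ l with hw
  have hw2 : w * w = 1 := by
    rw [hw, ← pow_add, ← two_mul, pow_mul]
    norm_num
  have hwinv : w⁻¹ = w := (eq_inv_of_mul_eq_one_left hw2).symm
  -- the entries of B
  obtain ⟨a, d, had, htrz⟩ : ∃ a d : ℂ, a + d = β + β⁻¹ ∧ α * a + α⁻¹ * d = z := by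
    refine ⟨(z - α⁻¹*(β+β⁻¹))/(α-α⁻¹), (β+β⁻¹) - (z - α⁻¹*(β+β⁻¹))/(α-α⁻¹), by ring, ?_⟩
    have h1 : (z - α⁻¹*(β+β⁻¹))/(α-α⁻¹) * (α - α⁻¹) = z - α⁻¹*(β+β⁻¹) :=
      div_mul_cancel₀ _ hαd
    linear_combination h1
  have hinvβ : β * β⁻¹ = 1 := mul_inv_cancel₀ hβ0
  -- matrices
  set Am : Matrix (Fin 2) (Fin 2) ℂ := !![α, 0; 0, α⁻¹] with hAm
  set Bm : Matrix (Fin 2) (Fin 2) ℂ := !![a, a*d-1; 1, d] with hBm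
  set Cm : Matrix (Fin 2) (Fin 2) ℂ := !![β - d, β⁻¹ - d; 1, 1] with hCm
  set Dm : Matrix (Fin 2) (Fin 2) ℂ := !![β, 0; 0, β⁻¹] with hDm
  have hdetA : Am.det = 1 := by
    rw [hAm, Matrix.det_fin_two_of]
    field_simp
    norm_num
  have hdetB : Bm.det = 1 := by rw [hBm, Matrix.det_fin_two_of]; ring
  have hdetC : Cm.det = β - β⁻¹ := by rw [hCm, Matrix.det_fin_two_of]; ring
  have hCunit : IsUnit Cm.det := by rw [hdetC]; exact Ne.isUnit hβd
  have hBC : Bm * Cm = Cm * Dm := by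
    rw [hBm, hCm, hDm, Matrix.mul_fin_two, Matrix.mul_fin_two]
    have e1 : a*(β-d) + (a*d-1)*1 = (β-d)*β + (β⁻¹-d)*0 := by
      linear_combination β * had + hinvβ
    have e2 : a*(β⁻¹-d) + (a*d-1)*1 = (β-d)*0 + (β⁻¹-d)*β⁻¹ := by
      linear_combination β⁻¹ * had + hinvβ
    have e3 : 1*(β-d) + d*1 = 1*β + 1*0 := by ring
    have e4 : 1*(β⁻¹-d) + d*1 = 1*0 + 1*β⁻¹ := by ring
    rw [e1, e2, e3, e4]
  have hBCD : Bm = Cm * Dm * Cm⁻¹ := by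
    calc Bm = Bm * (Cm * Cm⁻¹) := by rw [Matrix.mul_nonsing_inv Cm hCunit, mul_one]
      _ = (Bm * Cm) * Cm⁻¹ := by rw [mul_assoc]
      _ = Cm * Dm * Cm⁻¹ := by rw [hBC]
  have hwone : !![w, 0; 0, w] = w • (1 : Matrix (Fin 2) (Fin 2) ℂ) := by
    rw [Matrix.one_fin_two]
    ext i j
    fin_cases i <;> fin_cases j <;> simp
  have hDp : Dm ^ p = w • (1 : Matrix (Fin 2) (Fin 2) ℂ) := by
    rw [hDm, diag_pow, inv_pow, hβp, hwinv, hwone]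
  have hBp : Bm ^ p = w • (1 : Matrix (Fin 2) (Fin 2) ℂ) := by
    rw [hBCD, conj_pow' Cm Dm hCunit, hDp]
    rw [Matrix.mul_smul, Matrix.smul_mul, mul_one, Matrix.mul_nonsing_inv Cm hCunit]
  have hAq : Am ^ q = w • (1 : Matrix (Fin 2) (Fin 2) ℂ) := by
    rw [hAm, diag_pow, inv_pow, hαq, hneg, hwinv, hwone]
  refine ⟨⟨Am, hdetA⟩, ⟨Bm, hdetB⟩, ?_, ?_, ?_, ?_⟩
  · apply Subtype.ext
    show Am ^ q = Bm ^ p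
    rw [hAq, hBp]
  · show Matrix.trace Am = ((2 * Real.cos θa : ℝ) : ℂ)
    rw [hAm, Matrix.trace_fin_two_of, htrα]
  · show Matrix.trace Bm = ((2 * Real.cos θb : ℝ) : ℂ)
    rw [hBm, Matrix.trace_fin_two_of, ← htrβ]
    exact had
  · show Matrix.trace (Am * Bm) = z
    rw [hAm, hBm, Matrix.mul_fin_two, Matrix.trace_fin_two_of]
    linear_combination htrz
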